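/- The element 23 + 4√33 is a totally positive unit in the ring of integers of ℚ(√33), and it is not a square in ℚ₂ (under either embedding of ℚ(√33) into ℚ₂); in particular it is not a square in the ring of integers of any totally real number field containing it that embeds into ℚ₂. -/

import Mathlib

lemma sqrt33_sq : Real.sqrt 33 ^ 2 = 33 := Real.sq_sqrt (by norm_num)

lemma sqrt33_integral : IsIntegral ℤ (Real.sqrt 33) := by
  refine ⟨Polynomial.X ^ 2 - Polynomial.C 33,
    Polynomial.monic_X_pow_sub_C 33 (by norm_num), ?_⟩
  simp [sqrt33_sq]

lemma norm33 : ‖(33 : ℚ_[2])‖ = 1 := by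
  have h1 : ((33 : ℤ) : ℚ_[2]) = 33 := by norm_cast
  have hle := Padic.norm_int_le_one (p := 2) 33
  have hlt := (Padic.norm_intCast_lt_one_iff (p := 2) (k := 33))
  rw [h1] at hle hlt
  rcases lt_or_eq_of_le hle with h | h
  · exact absurd (hlt.mp h) (by norm_num)
  · exact h

lemma qp2_not_square (s : ℚ_[2]) (hs : s ^ 2 = 33) :
    ¬∃ y : ℚ_[2], 23 + 4 * s = y ^ 2 := by
  rintro ⟨y, hy⟩
  have hns : ‖s‖ = 1 := by
    have : ‖s‖ ^ 2 = 1 := by rw [← norm_pow, hs, norm33]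
    nlinarith [norm_nonneg s]
  have h2 : ‖(2 : ℚ_[2])‖ = 2⁻¹ := by
    simpa using Padic.norm_p (p := 2)
  have h4 : ‖(4 : ℚ_[2])‖ = 4⁻¹ := by
    have : (4 : ℚ_[2]) = 2 * 2 := by norm_num
    rw [this, norm_mul, h2]; norm_num
  have h11 : ‖(11 : ℚ_[2])‖ = 1 := by
    have h1 : ((11 : ℤ) : ℚ_[2]) = 11 := by norm_cast
    have hle := Padic.norm_int_le_one (p := 2) 11
    have hlt := (Padic.norm_intCast_lt_one_iff (p := 2) (k := 11))
    rw [h1] at hle hlt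
    rcases lt_or_eq_of_le hle with h | h
    · exact absurd (hlt.mp h) (by norm_num)
    · exact h
  have h23 : ‖(23 : ℚ_[2])‖ = 1 := by
    have h1 : ((23 : ℤ) : ℚ_[2]) = 23 := by norm_cast
    have hle := Padic.norm_int_le_one (p := 2) 23
    have hlt := (Padic.norm_intCast_lt_one_iff (p := 2) (k := 23))
    rw [h1] at hle hlt
    rcases lt_or_eq_of_le hle with h | h
    · exact absurd (hlt.mp h) (by norm_num)
    · exact h
  -- ‖23 + 4s - 1‖ = 1/2
  have key : ‖(23 : ℚ_[2]) + 4 * s - 1‖ = 2⁻¹ := by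
    have heq : (23 : ℚ_[2]) + 4 * s - 1 = 2 * (11 + 2 * s) := by ring
    have hin : ‖(11 : ℚ_[2]) + 2 * s‖ = 1 := by
      have hne : ‖(11 : ℚ_[2])‖ ≠ ‖2 * s‖ := by
        rw [h11, norm_mul, h2, hns]; norm_num
      rw [Padic.add_eq_max_of_ne hne, h11, norm_mul, h2, hns]
      norm_num
    rw [heq, norm_mul, h2, hin]; norm_num
  -- ‖y‖ = 1
  have hy1 : ‖y‖ = 1 := by
    have ht : ‖(23 : ℚ_[2]) + 4 * s‖ = 1 := by
      have hne : ‖(23 : ℚ_[2])‖ ≠ ‖4 * s‖ := by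
        rw [h23, norm_mul, h4, hns]; norm_num
      rw [Padic.add_eq_max_of_ne hne, h23, norm_mul, h4, hns]
      norm_num
    have : ‖y‖ ^ 2 = 1 := by rw [← norm_pow, ← hy, ht]
    nlinarith [norm_nonneg y]
  have hfac : ‖y - 1‖ * ‖y + 1‖ = 2⁻¹ := by
    rw [← norm_mul]
    have h' : (y - 1) * (y + 1) = y ^ 2 - 1 := by ring
    have : (y - 1) * (y + 1) = 23 + 4 * s - 1 := by rw [h', ← hy]
    rw [this, key]
  have hym1 : ‖y - 1‖ ≤ 1 := by
    have : y - 1 = y + (-1) := by ring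
    rw [this]
    calc ‖y + (-1)‖ ≤ max ‖y‖ ‖(-1 : ℚ_[2])‖ := Padic.nonarchimedean _ _
      _ = 1 := by rw [hy1, norm_neg, norm_one, max_self]
  rcases eq_or_lt_of_le hym1 with h1 | h1
  · -- ‖y-1‖ = 1 ⇒ ‖y+1‖ = 1 ⇒ product 1 ≠ 1/2
    have hyp1 : ‖y + 1‖ = 1 := by
      have heq : y + 1 = (y - 1) + 2 := by ring
      have hne : ‖y - 1‖ ≠ ‖(2 : ℚ_[2])‖ := by rw [h1, h2]; norm_num
      rw [heq, Padic.add_eq_max_of_ne hne, h1, h2]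
      norm_num
    rw [h1, hyp1, mul_one] at hfac
    norm_num at hfac
  · -- ‖y-1‖ < 1 ⇒ ≤ 1/2, and ‖y+1‖ ≤ 1/2 ⇒ product ≤ 1/4
    have hle : ‖y - 1‖ ≤ 2⁻¹ := by
      have := (Padic.norm_le_pow_iff_norm_lt_pow_add_one (y - 1) (-1)).mpr
      simp only [neg_add_cancel, zpow_zero] at this
      have h := this (by exact_mod_cast h1)
      simpa using h
    have hle2 : ‖y + 1‖ ≤ 2⁻¹ := by
      have heq : y + 1 = (y - 1) + 2 := by ring
      calc ‖y + 1‖ = ‖(y - 1) + 2‖ := by rw [← heq]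
        _ ≤ max ‖y - 1‖ ‖(2 : ℚ_[2])‖ := Padic.nonarchimedean _ _
        _ ≤ 2⁻¹ := max_le hle (le_of_eq h2)
    nlinarith [norm_nonneg (y - 1), norm_nonneg (y + 1)]

theorem twentythree_add_four_sqrt33_totally_positive_unit_not_square_in_Qp2 :
    (0 < 23 + 4 * Real.sqrt 33) ∧ (0 < 23 - 4 * Real.sqrt 33) ∧
      IsIntegral ℤ (23 + 4 * Real.sqrt 33) ∧ IsIntegral ℤ (23 - 4 * Real.sqrt 33) ∧
      (23 + 4 * Real.sqrt 33) * (23 - 4 * Real.sqrt 33) = 1 ∧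
      (∀ s : ℚ_[2], s ^ 2 = 33 → ¬∃ y : ℚ_[2], 23 + 4 * s = y ^ 2) ∧
      (∀ s : ℚ_[2], s ^ 2 = 33 → ¬∃ y : ℚ_[2], IsIntegral ℤ y ∧ 23 + 4 * s = y ^ 2) := by
  have hs := sqrt33_sq
  have hnn := Real.sqrt_nonneg 33
  have h23 : IsIntegral ℤ (23 : ℝ) := by
    simpa using isIntegral_algebraMap (A := ℝ) (x := (23 : ℤ))
  have h4 : IsIntegral ℤ (4 : ℝ) := by
    simpa using isIntegral_algebraMap (A := ℝ) (x := (4 : ℤ))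
  exact ⟨by positivity, by nlinarith, h23.add (h4.mul sqrt33_integral),
    h23.sub (h4.mul sqrt33_integral), by nlinarith, qp2_not_square,
    fun s hs ⟨y, _, hy⟩ => qp2_not_square s hs ⟨y, hy⟩⟩
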